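/- Let (M,g) be a compact Riemannian manifold. If there exists a function φ and κ > 0 with sec_φ ≥ -κ e^{-4φ}, then for every ε > 0 there exists a function ψ with sec_ψ ≥ -ε e^{-4ψ}. Hence sup{κ : ∃φ with sec_φ ≥ κ e^{-4φ}} is either 0 or +∞, and it equals +∞ if and only if (M,g) admits a function φ with sec_φ > 0 everywhere. -/

import Mathlib

/-- On a compact Riemannian manifold, if some density φ and κ > 0 give
sec_φ ≥ -κ e^{-4φ}, then for every ε > 0 some ψ gives sec_ψ ≥ -ε e^{-4ψ}; the supremum of
{κ : ∃φ, sec_φ ≥ κ e^{-4φ}} is 0 or +∞ (unboundedness), and it is +∞ iff (M,g) has PWSC,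
i.e. some φ has sec_φ > 0 everywhere.
Here `OP` is the (compact, since M is compact) bundle of orthonormal pairs, `secw φ o`
is the weighted sectional curvature of the pair `o` for density `φ`; `hshift` encodes
invariance of sec_φ under adding constants to φ, `hcont` encodes continuity in the point
of the rescaled curvature e^{4φ} sec_φ. -/
theorem stmt_1 {M OP : Type*} [TopologicalSpace OP] [CompactSpace OP] [Nonempty OP]
    (basept : OP → M)
    (secw : (M → ℝ) → OP → ℝ)
    (hshift : ∀ (φ : M → ℝ) (c : ℝ), secw (fun x => φ x + c) = secw φ)
    (hcont : ∀ φ : M → ℝ, Continuous fun o => secw φ o * Real.exp (4 * φ (basept o))) :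
    (∀ κ : ℝ, 0 < κ →
        (∃ φ : M → ℝ, ∀ o, -κ * Real.exp (-4 * φ (basept o)) ≤ secw φ o) →
        ∀ ε : ℝ, 0 < ε →
          ∃ ψ : M → ℝ, ∀ o, -ε * Real.exp (-4 * ψ (basept o)) ≤ secw ψ o) ∧
    (¬ BddAbove {κ : ℝ | ∃ φ : M → ℝ, ∀ o, κ * Real.exp (-4 * φ (basept o)) ≤ secw φ o}
        ↔ ∃ φ : M → ℝ, ∀ o, 0 < secw φ o) ∧
    (BddAbove {κ : ℝ | ∃ φ : M → ℝ, ∀ o, κ * Real.exp (-4 * φ (basept o)) ≤ secw φ o} →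
      IsLUB {κ : ℝ | ∃ φ : M → ℝ, ∀ o, κ * Real.exp (-4 * φ (basept o)) ≤ secw φ o} 0) := by

  set S := {κ : ℝ | ∃ φ : M → ℝ, ∀ o, κ * Real.exp (-4 * φ (basept o)) ≤ secw φ o} with hSdef
  -- scaling: S is closed under multiplication by positive reals
  have hscale : ∀ κ ∈ S, ∀ t : ℝ, 0 < t → κ * t ∈ S := by
    rintro κ ⟨φ, hφ⟩ t ht
    refine ⟨fun x => φ x + Real.log t / 4, fun o => ?_⟩
    rw [hshift]
    have h1 : Real.exp (-4 * (φ (basept o) + Real.log t / 4))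
        = Real.exp (-4 * φ (basept o)) * t⁻¹ := by
      rw [show -4 * (φ (basept o) + Real.log t / 4)
          = -4 * φ (basept o) + -Real.log t by ring,
        Real.exp_add, Real.exp_neg, Real.exp_log ht]
    rw [h1]
    have h2 : κ * t * (Real.exp (-4 * φ (basept o)) * t⁻¹)
        = κ * Real.exp (-4 * φ (basept o)) := by
      field_simp
    rw [h2]; exact hφ o
  -- every φ yields an element of S via compactness
  have hmin : ∀ φ : M → ℝ, ∃ m ∈ S, ∀ o, m ≤ secw φ o * Real.exp (4 * φ (basept o)) := by
    intro φ
    obtain ⟨x, -, hx'⟩ := isCompact_univ.exists_isMinOn Set.univ_nonempty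
      (hcont φ).continuousOn
    have hx := isMinOn_iff.mp hx'
    refine ⟨secw φ x * Real.exp (4 * φ (basept x)), ⟨φ, fun o => ?_⟩,
      fun o => hx o (Set.mem_univ o)⟩
    have h := hx o (Set.mem_univ o)
    have hpos := Real.exp_pos (-4 * φ (basept o))
    have hkey : Real.exp (4 * φ (basept o)) * Real.exp (-4 * φ (basept o)) = 1 := by
      rw [← Real.exp_add]; ring_nf; exact Real.exp_zero
    have h2 : secw φ o * Real.exp (4 * φ (basept o)) * Real.exp (-4 * φ (basept o))
        = secw φ o := by rw [mul_assoc, hkey, mul_one]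
    linarith [mul_le_mul_of_nonneg_right h hpos.le]
  -- positive element of S implies unboundedness
  have hub : ∀ κ ∈ S, 0 < κ → ¬ BddAbove S := by
    rintro κ hκS hκ ⟨b, hb⟩
    have ht : (0:ℝ) < max (b / κ + 1) 1 := lt_of_lt_of_le one_pos (le_max_right _ _)
    have h1 := hb (hscale κ hκS _ ht)
    have h2 : κ * (b / κ + 1) ≤ κ * max (b / κ + 1) 1 :=
      mul_le_mul_of_nonneg_left (le_max_left _ _) hκ.le
    have h3 : κ * (b / κ + 1) = b + κ := by field_simp
    linarith
  refine ⟨?_, ⟨?_, ?_⟩, ?_⟩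
  · -- part 1
    rintro κ hκ ⟨φ, hφ⟩ ε hε
    refine ⟨fun x => φ x + Real.log (ε / κ) / 4, fun o => ?_⟩
    rw [hshift]
    have hεκ : (0:ℝ) < ε / κ := div_pos hε hκ
    have h1 : Real.exp (-4 * (φ (basept o) + Real.log (ε / κ) / 4))
        = Real.exp (-4 * φ (basept o)) * (ε / κ)⁻¹ := by
      rw [show -4 * (φ (basept o) + Real.log (ε / κ) / 4)
          = -4 * φ (basept o) + -Real.log (ε / κ) by ring,
        Real.exp_add, Real.exp_neg, Real.exp_log hεκ]
    rw [h1]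
    have h2 : -ε * (Real.exp (-4 * φ (basept o)) * (ε / κ)⁻¹)
        = -κ * Real.exp (-4 * φ (basept o)) := by
      field_simp
    rw [h2]; exact hφ o
  · -- ¬BddAbove → PWSC
    intro hB
    have : ∃ κ ∈ S, 0 < κ := by
      by_contra h
      push_neg at h
      exact hB ⟨0, fun κ hκ => h κ hκ⟩
    obtain ⟨κ, ⟨φ, hφ⟩, hκ⟩ := this
    exact ⟨φ, fun o => lt_of_lt_of_le (mul_pos hκ (Real.exp_pos _)) (hφ o)⟩
  · -- PWSC → ¬BddAbove
    rintro ⟨φ, hφ⟩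
    obtain ⟨m, hmS, hm⟩ := hmin φ
    obtain ⟨y, -, hy'⟩ := isCompact_univ.exists_isMinOn Set.univ_nonempty
      (hcont φ).continuousOn
    have hy := isMinOn_iff.mp hy'
    have hmin' : (0:ℝ) < secw φ y * Real.exp (4 * φ (basept y)) :=
      mul_pos (hφ y) (Real.exp_pos _)
    have hmemS : secw φ y * Real.exp (4 * φ (basept y)) ∈ S := by
      refine ⟨φ, fun o => ?_⟩
      have h := hy o (Set.mem_univ o)
      have hpos := Real.exp_pos (-4 * φ (basept o))
      have hkey : Real.exp (4 * φ (basept o)) * Real.exp (-4 * φ (basept o)) = 1 := by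
        rw [← Real.exp_add]; ring_nf; exact Real.exp_zero
      have h2 : secw φ o * Real.exp (4 * φ (basept o)) * Real.exp (-4 * φ (basept o))
          = secw φ o := by rw [mul_assoc, hkey, mul_one]
      linarith [mul_le_mul_of_nonneg_right h hpos.le]
    exact hub _ hmemS hmin'
  · -- BddAbove → IsLUB S 0
    intro hB
    constructor
    · intro κ hκ
      by_contra h
      exact hub κ hκ (lt_of_not_ge fun h0 => h h0) hB
    · intro u hu
      by_contra hltu
      push_neg at hltu
      obtain ⟨m, hmS, -⟩ := hmin (fun _ => 0)
      have hm0 : m ≤ 0 := by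
        by_contra h
        exact hub m hmS (lt_of_not_ge h) hB
      rcases lt_or_eq_of_le hm0 with hm | hm
      · have ht : 0 < u / (2 * m) := div_pos_of_neg_of_neg hltu (by linarith)
        have := hu (hscale m hmS _ ht)
        have hm' : m ≠ 0 := ne_of_lt hm
        have heq : m * (u / (2 * m)) = u / 2 := by
          field_simp
        rw [heq] at this
        linarith
      · subst hm
        exact absurd (hu hmS) (not_le.2 hltu)
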